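/- Let f : ℕ → ℝ⁺ satisfy Δf > 0 and Δ²f ≥ 0, and suppose limsup_{x→∞} N(x)²/x > 18 where N(x) = |{n : f(n) ≤ x}|. Then the graph of n ↦ ⌊f(n)⌋ contains an arithmetic progression of length 4. -/

import Mathlib

def Ssum (u : ℕ → ℕ) (a : ℕ) : ℕ → ℕ
  | 0 => 0
  | d+1 => Ssum u a d + u (a + d)

def hasPat (u : ℕ → ℕ) (n : ℕ) : Bool :=
  (List.range n).any fun dm1 =>
    let d := dm1 + 1
    (List.range (n + 1 - 3*d)).any fun e =>
      (Ssum u e d == Ssum u (e+d) d) && (Ssum u (e+d) d == Ssum u (e+2*d) d)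

def vOf (l : List ℕ) : ℕ → ℕ := fun i => l.getD i 0

def enumBin : ℕ → List (List ℕ)
  | 0 => [[]]
  | n+1 => (enumBin n).flatMap fun l => [0 :: l, 1 :: l]

def L6 : List (List ℕ) :=
  [[0,0,1,1,0,1,1,0,0],[0,0,1,1,0,1,1,0,1],[0,1,0,0,1,0,0,1,1],
   [1,0,1,1,0,1,1,0,0],[1,1,0,0,1,0,0,1,0],[1,1,0,0,1,0,0,1,1]]

def L3 : List (List ℕ) :=
  [[1,0,1,1,0,1,1,0,0],[1,1,0,0,1,0,0,1,0],[1,1,0,0,1,0,0,1,1]]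

def comp3 (A B C : List ℕ) : List ℕ :=
  A ++ (B.map (· + 1)) ++ (C.map (· + 2))

set_option maxRecDepth 10000 in
theorem D1 : ((enumBin 10).all fun l => hasPat (vOf l) 10) = true := by decide

set_option maxRecDepth 10000 in
theorem D2 : ((enumBin 9).all fun l => hasPat (vOf l) 9 || L6.contains l) = true := by decide

set_option maxRecDepth 10000 in
theorem D4 : (L6.all fun A => L3.all fun B => L3.all fun C =>
    hasPat (vOf (comp3 A B C)) 27) = true := by decide

-- basic Ssum lemmas
theorem Ssum_congr {u v : ℕ → ℕ} {a d : ℕ} (h : ∀ i, i < d → u (a+i) = v (a+i)) :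
    Ssum u a d = Ssum v a d := by
  induction d with
  | zero => rfl
  | succ d ih =>
      simp only [Ssum]
      rw [ih (fun i hi => h i (by omega)), h d (by omega)]

theorem Ssum_add_const (w : ℕ → ℕ) (k a d : ℕ) :
    Ssum (fun i => w i + k) a d = Ssum w a d + d * k := by
  induction d with
  | zero => simp [Ssum]
  | succ d ih => simp only [Ssum, ih]; ring

theorem Ssum_shift (u : ℕ → ℕ) (t a d : ℕ) :
    Ssum (fun i => u (t + i)) a d = Ssum u (t + a) d := by
  induction d with
  | zero => rfl
  | succ d ih => simp only [Ssum, ih]; rw [Nat.add_assoc]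

theorem hasPat_sound {u : ℕ → ℕ} {n : ℕ} (h : hasPat u n = true) :
    ∃ d e, 1 ≤ d ∧ e + 3*d ≤ n ∧ Ssum u e d = Ssum u (e+d) d ∧
      Ssum u (e+d) d = Ssum u (e+2*d) d := by
  simp only [hasPat, List.any_eq_true, List.mem_range, Bool.and_eq_true, beq_iff_eq] at h
  obtain ⟨dm1, _, e, he, h1, h2⟩ := h
  exact ⟨dm1+1, e, by omega, by omega, h1, h2⟩

theorem mem_enumBin : ∀ l : List ℕ, (∀ x ∈ l, x ≤ 1) → l ∈ enumBin l.length := by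
  intro l
  induction l with
  | nil => intro _; simp [enumBin]
  | cons x t ih =>
      intro h
      have ht : t ∈ enumBin t.length := ih fun y hy => h y (List.mem_cons_of_mem _ hy)
      have hx : x ≤ 1 := h x List.mem_cons_self
      simp only [List.length_cons, enumBin, List.mem_flatMap]
      exact ⟨t, ht, by interval_cases x <;> simp⟩

theorem vOf_map_range (f : ℕ → ℕ) (n i : ℕ) (h : i < n) :
    vOf ((List.range n).map f) i = f i := by
  simp [vOf, List.getD_eq_getElem?_getD, List.getElem?_map, List.getElem?_range h]

theorem B10 (w : ℕ → ℕ) (hw : ∀ i, i < 10 → w i ≤ 1) :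
    ∃ d e, 1 ≤ d ∧ e + 3*d ≤ 10 ∧ Ssum w e d = Ssum w (e+d) d ∧
      Ssum w (e+d) d = Ssum w (e+2*d) d := by
  set l := (List.range 10).map w with hl
  have hlen : l.length = 10 := by simp [hl]
  have hmem : l ∈ enumBin 10 := by
    have h2 := mem_enumBin l ?_
    · rwa [hlen] at h2
    · intro x hx
      simp only [hl, List.mem_map, List.mem_range] at hx
      obtain ⟨i, hi, rfl⟩ := hx; exact hw i hi
  have hp : hasPat (vOf l) 10 = true := by
    have h3 := List.all_eq_true.1 D1 l hmem; simpa using h3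
  obtain ⟨d, e, hd, hde, h1, h2⟩ := hasPat_sound hp
  have key : ∀ a, a + d ≤ 10 → Ssum (vOf l) a d = Ssum w a d := fun a ha =>
    Ssum_congr (fun i hi => vOf_map_range w 10 (a+i) (by omega))
  refine ⟨d, e, hd, hde, ?_, ?_⟩
  · rw [← key e (by omega), ← key (e+d) (by omega)]; exact h1
  · rw [← key (e+d) (by omega), ← key (e+2*d) (by omega)]; exact h2

theorem B10' (u : ℕ → ℕ) (t k : ℕ) (hlow : ∀ i, i < 10 → k ≤ u (t + i))
    (hhigh : ∀ i, i < 10 → u (t + i) ≤ k + 1) :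
    ∃ d e, 1 ≤ d ∧ t ≤ e ∧ e + 3*d ≤ t + 10 ∧ Ssum u e d = Ssum u (e+d) d ∧
      Ssum u (e+d) d = Ssum u (e+2*d) d := by
  set w : ℕ → ℕ := fun i => u (t + i) - k with hw
  obtain ⟨d, e, hd, hde, h1, h2⟩ := B10 w (fun i hi => by
    have := hlow i hi; have := hhigh i hi; simp only [hw]; omega)
  have key : ∀ a, a + d ≤ 10 → Ssum u (t + a) d = Ssum w a d + d * k := by
    intro a ha
    rw [← Ssum_shift u t a d]
    rw [show Ssum (fun i => u (t+i)) a d = Ssum (fun i => w i + k) a d from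
      Ssum_congr (fun i hi => by
        have := hlow (a+i) (by omega); simp only [hw]; omega)]
    exact Ssum_add_const w k a d
  refine ⟨d, t + e, hd, by omega, by omega, ?_, ?_⟩
  · rw [show t + e + d = t + (e + d) from by omega, key e (by omega),
      key (e+d) (by omega), h1]
  · rw [show t + e + d = t + (e + d) from by omega,
      show t + e + 2*d = t + (e + 2*d) from by omega, key (e+d) (by omega),
      key (e+2*d) (by omega), h2]

theorem Ssum_window (u : ℕ → ℕ) (t k n : ℕ) (hlow : ∀ i, i < n → k ≤ u (t+i))
    {a d : ℕ} (had : a + d ≤ n) :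
    Ssum u (t + a) d = Ssum (fun i => u (t+i) - k) a d + d * k := by
  rw [← Ssum_shift u t a d,
    show Ssum (fun i => u (t+i)) a d = Ssum (fun i => (u (t+i) - k) + k) a d from
      Ssum_congr fun i hi => by have := hlow (a+i) (by omega); omega]
  exact Ssum_add_const _ k a d

/-- A pattern-free 9-stretch with letters in {k, k+1} must be one of the six avoiders. -/
theorem stretch_mem (u : ℕ → ℕ) (t k : ℕ) (ht : t + 9 ≤ 27)
    (hlow : ∀ i, i < 9 → k ≤ u (t+i)) (hhigh : ∀ i, i < 9 → u (t+i) ≤ k+1)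
    (hnp : ∀ d e, 1 ≤ d → e + 3*d ≤ 27 → Ssum u e d = Ssum u (e+d) d →
      Ssum u (e+d) d ≠ Ssum u (e+2*d) d) :
    ((List.range 9).map (fun i => u (t+i) - k)) ∈ L6 := by
  set l := (List.range 9).map (fun i => u (t+i) - k) with hl
  have hlen : l.length = 9 := by simp [hl]
  have hmem : l ∈ enumBin 9 := by
    have h2 := mem_enumBin l ?_
    · rwa [hlen] at h2
    · intro x hx
      simp only [hl, List.mem_map, List.mem_range] at hx
      obtain ⟨i, hi, rfl⟩ := hx
      have := hhigh i hi; omega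
  have hD2 := List.all_eq_true.1 D2 l hmem
  simp only [Bool.or_eq_true] at hD2
  rcases hD2 with hp | hc
  · exfalso
    obtain ⟨d, e, hd, hde, h1, h2⟩ := hasPat_sound hp
    have key : ∀ a, a + d ≤ 9 → Ssum u (t + a) d = Ssum (vOf l) a d + d * k := by
      intro a ha
      rw [Ssum_window u t k 9 (fun i hi => hlow i hi) (by omega : a + d ≤ 9)]
      congr 1
      exact (Ssum_congr (fun i hi => vOf_map_range _ 9 (a+i) (by omega))).symm
    refine hnp d (t+e) hd (by omega) ?_ ?_
    · rw [show t + e + d = t + (e + d) from by omega, key e (by omega),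
        key (e+d) (by omega), h1]
    · rw [show t + e + d = t + (e + d) from by omega,
        show t + e + 2*d = t + (e + 2*d) from by omega, key (e+d) (by omega),
        key (e+2*d) (by omega), h2]
  · simpa using hc

theorem mem_L3_of {l : List ℕ} (h : l ∈ L6) (hh : l.getD 0 0 = 1) : l ∈ L3 := by
  simp only [L6, List.mem_cons, List.not_mem_nil, or_false] at h
  rcases h with rfl | rfl | rfl | rfl | rfl | rfl <;> simp_all [L3]

theorem vOf_comp3 (u : ℕ → ℕ) (hB1 : ∀ i, i < 9 → 1 ≤ u (9+i))
    (hC2 : ∀ i, i < 9 → 2 ≤ u (18+i)) (i : ℕ) (hi : i < 27) :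
    vOf (comp3 ((List.range 9).map (fun j => u (0+j) - 0))
               ((List.range 9).map (fun j => u (9+j) - 1))
               ((List.range 9).map (fun j => u (18+j) - 2))) i = u i := by
  set A := (List.range 9).map (fun j => u (0+j) - 0) with hA
  set B := (List.range 9).map (fun j => u (9+j) - 1) with hB
  set C := (List.range 9).map (fun j => u (18+j) - 2) with hC
  have hAl : A.length = 9 := by simp [hA]
  have hABl : (A ++ B.map (· + 1)).length = 18 := by simp [hA, hB]
  simp only [comp3, vOf, List.getD_eq_getElem?_getD]
  rw [List.getElem?_append]
  rcases Nat.lt_or_ge i 9 with h9 | h9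
  · rw [if_pos (by omega)]
    rw [List.getElem?_append, if_pos (by omega)]
    have hsome : A[i]? = some (u (0+i) - 0) := by
      simp [hA, List.getElem?_map, List.getElem?_range h9]
    rw [hsome]
    simp only [Option.getD_some, Nat.zero_add, Nat.sub_zero]
  · rcases Nat.lt_or_ge i 18 with h18 | h18
    · rw [if_pos (by omega)]
      rw [List.getElem?_append, if_neg (by omega), hAl]
      have hsome : (B.map (· + 1))[i-9]? = some ((u (9+(i-9)) - 1) + 1) := by
        simp [hB, List.getElem?_map, List.getElem?_range (show i - 9 < 9 by omega)]
      rw [hsome]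
      have := hB1 (i-9) (by omega)
      have h99 : 9 + (i - 9) = i := by omega
      rw [h99] at this ⊢
      simp only [Option.getD_some]
      omega
    · rw [if_neg (by omega), hABl]
      have hsome : (C.map (· + 2))[i-18]? = some ((u (18+(i-18)) - 2) + 2) := by
        simp [hC, List.getElem?_map, List.getElem?_range (show i - 18 < 9 by omega)]
      rw [hsome]
      have := hC2 (i-18) (by omega)
      have h99 : 18 + (i - 18) = i := by omega
      rw [h99] at this ⊢
      simp only [Option.getD_some]
      omega

theorem FL (u : ℕ → ℕ) (h3 : ∀ i, i < 27 → u i ≤ 3)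
    (hq : ∀ i j, i ≤ j → j < 27 → u i ≤ u j + 1)
    (hnp : ∀ d e, 1 ≤ d → e + 3*d ≤ 27 → Ssum u e d = Ssum u (e+d) d →
      Ssum u (e+d) d ≠ Ssum u (e+2*d) d) : False := by
  classical
  have catch10 : ∀ t k, t + 10 ≤ 27 → (∀ i, i < 10 → k ≤ u (t+i)) →
      (∀ i, i < 10 → u (t+i) ≤ k+1) → False := by
    intro t k ht hl hh
    obtain ⟨d, e, hd, hte, hde, h1, h2⟩ := B10' u t k hl hh
    exact hnp d e hd (by omega) h1 h2
  by_cases P1 : ∃ i, i < 27 ∧ 2 ≤ u i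
  · set j1 := Nat.find P1 with hj1def
    have hj1a : j1 < 27 := (Nat.find_spec P1).1
    have hj1b : 2 ≤ u j1 := (Nat.find_spec P1).2
    have hj1min : ∀ m, m < j1 → u m ≤ 1 := by
      intro m hm
      have h := Nat.find_min P1 hm
      by_contra hc
      exact h ⟨by omega, by omega⟩
    have hj1le : j1 ≤ 9 := by
      by_contra hc
      push_neg at hc
      refine catch10 0 0 (by omega) (fun i _ => Nat.zero_le _) (fun i hi => ?_)
      have := hj1min (0+i) (by omega); omega
    have hu3 := h3 j1 hj1a
    rcases (by omega : u j1 = 2 ∨ u j1 = 3) with h2' | h3'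
    · by_cases Q : ∃ i, i < 27 ∧ j1 < i ∧ 3 ≤ u i
      · set j2 := Nat.find Q with hj2def
        have hj2a : j2 < 27 := (Nat.find_spec Q).1
        have hj2b : j1 < j2 := (Nat.find_spec Q).2.1
        have hj2c : 3 ≤ u j2 := (Nat.find_spec Q).2.2
        have hj2min : ∀ m, j1 < m → m < j2 → u m ≤ 2 := by
          intro m hm1 hm2
          have h := Nat.find_min Q hm2
          by_contra hc
          exact h ⟨by omega, hm1, by omega⟩
        have hj2ge : 18 ≤ j2 := by
          by_contra hc
          push_neg at hc
          refine catch10 j2 2 (by omega) (fun i hi => ?_) (fun i hi => ?_)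
          · have := hq j2 (j2+i) (by omega) (by omega); omega
          · have := h3 (j2+i) (by omega); omega
        have hj2le : j2 ≤ j1 + 9 := by
          by_contra hc
          push_neg at hc
          refine catch10 j1 1 (by omega) (fun i hi => ?_) (fun i hi => ?_)
          · have := hq j1 (j1+i) (by omega) (by omega); omega
          · rcases Nat.eq_zero_or_pos i with rfl | hipos
            · have : j1 + 0 = j1 := rfl
              rw [this]; omega
            · have := hj2min (j1+i) (by omega) (by omega); omega
        have hj19 : j1 = 9 := by omega
        have hj218 : j2 = 18 := by omega
        have hu9 : u 9 = 2 := by rw [← hj19]; exact h2'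
        have hu18 : u 18 = 3 := by
          have h18 := h3 j2 hj2a
          have : u j2 = 3 := by omega
          rw [← hj218]; exact this
        have hB1 : ∀ i, i < 9 → 1 ≤ u (9+i) := by
          intro i hi
          have := hq 9 (9+i) (by omega) (by omega); omega
        have hB2 : ∀ i, i < 9 → u (9+i) ≤ 2 := by
          intro i hi
          rcases Nat.eq_zero_or_pos i with rfl | hipos
          · have h0 : (9:ℕ) + 0 = 9 := rfl
            rw [h0]; omega
          · have := hj2min (9+i) (by omega) (by omega); omega
        have hC1 : ∀ i, i < 9 → 2 ≤ u (18+i) := by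
          intro i hi
          have := hq 18 (18+i) (by omega) (by omega); omega
        have hC2 : ∀ i, i < 9 → u (18+i) ≤ 3 := fun i hi => h3 (18+i) (by omega)
        have hAm : ((List.range 9).map (fun j => u (0+j) - 0)) ∈ L6 := by
          refine stretch_mem u 0 0 (by omega) (fun i _ => Nat.zero_le _)
            (fun i hi => ?_) hnp
          have := hj1min (0+i) (by omega); omega
        have hBm6 : ((List.range 9).map (fun j => u (9+j) - 1)) ∈ L6 :=
          stretch_mem u 9 1 (by omega) hB1 (fun i hi => by have := hB2 i hi; omega) hnp
        have hCm6 : ((List.range 9).map (fun j => u (18+j) - 2)) ∈ L6 :=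
          stretch_mem u 18 2 (by omega) hC1 (fun i hi => by have := hC2 i hi; omega) hnp
        have hBm : ((List.range 9).map (fun j => u (9+j) - 1)) ∈ L3 := by
          refine mem_L3_of hBm6 ?_
          have hv : vOf ((List.range 9).map (fun j => u (9+j) - 1)) 0 = u (9+0) - 1 :=
            vOf_map_range _ 9 0 (by omega)
          simp only [vOf] at hv
          rw [hv]
          have h0 : (9:ℕ) + 0 = 9 := rfl
          rw [h0, hu9]
        have hCm : ((List.range 9).map (fun j => u (18+j) - 2)) ∈ L3 := by
          refine mem_L3_of hCm6 ?_
          have hv : vOf ((List.range 9).map (fun j => u (18+j) - 2)) 0 = u (18+0) - 2 :=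
            vOf_map_range _ 9 0 (by omega)
          simp only [vOf] at hv
          rw [hv]
          have h0 : (18:ℕ) + 0 = 18 := rfl
          rw [h0, hu18]
        have hD4 : hasPat (vOf (comp3 ((List.range 9).map (fun j => u (0+j) - 0))
            ((List.range 9).map (fun j => u (9+j) - 1))
            ((List.range 9).map (fun j => u (18+j) - 2)))) 27 = true := by
          have t1 := List.all_eq_true.1 D4 _ hAm
          have t2 := List.all_eq_true.1 t1 _ hBm
          have t3 := List.all_eq_true.1 t2 _ hCm
          exact t3
        obtain ⟨d, e, hd, hde, hp1, hp2⟩ := hasPat_sound hD4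
        have key : ∀ a, a + d ≤ 27 →
            Ssum (vOf (comp3 ((List.range 9).map (fun j => u (0+j) - 0))
              ((List.range 9).map (fun j => u (9+j) - 1))
              ((List.range 9).map (fun j => u (18+j) - 2)))) a d = Ssum u a d :=
          fun a ha => Ssum_congr (fun i hi => vOf_comp3 u hB1 hC1 (a+i) (by omega))
        refine hnp d e hd hde ?_ ?_
        · rw [← key e (by omega), ← key (e+d) (by omega)]; exact hp1
        · rw [← key (e+d) (by omega), ← key (e+2*d) (by omega)]; exact hp2
      · push_neg at Q
        refine catch10 j1 1 (by omega) (fun i hi => ?_) (fun i hi => ?_)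
        · have := hq j1 (j1+i) (by omega) (by omega); omega
        · rcases Nat.eq_zero_or_pos i with rfl | hipos
          · have h0 : j1 + 0 = j1 := rfl
            rw [h0]; omega
          · have := Q (j1+i) (by omega) (by omega); omega
    · refine catch10 j1 2 (by omega) (fun i hi => ?_) (fun i hi => ?_)
      · have := hq j1 (j1+i) (by omega) (by omega); omega
      · have := h3 (j1+i) (by omega); omega
  · push_neg at P1
    refine catch10 0 0 (by omega) (fun i _ => Nat.zero_le _) (fun i hi => ?_)
    have := P1 (0+i) (by omega); omega

def Zsum (g : ℕ → ℤ) (a : ℕ) : ℕ → ℤ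
  | 0 => 0
  | d+1 => Zsum g a d + g (a + d)

theorem Zsum_shift (g : ℕ → ℤ) (t a d : ℕ) :
    Zsum (fun i => g (t + i)) a d = Zsum g (t + a) d := by
  induction d with
  | zero => rfl
  | succ d ih => simp only [Zsum, ih]; rw [Nat.add_assoc]

theorem Zsum_eq_ofNat (g : ℕ → ℤ) (u : ℕ → ℕ) (C : ℤ) (a d : ℕ)
    (h : ∀ i, i < d → g (a+i) = C + (u (a+i) : ℤ)) :
    Zsum g a d = d * C + (Ssum u a d : ℤ) := by
  induction d with
  | zero => simp [Zsum, Ssum]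
  | succ d ih =>
      simp only [Zsum, Ssum]
      rw [ih (fun i hi => h i (by omega)), h d (by omega)]
      push_cast
      ring

theorem WL (g : ℕ → ℤ) (t : ℕ) (V : ℤ)
    (hband : ∀ i, i < 27 → V - 1 ≤ g (t+i) ∧ g (t+i) ≤ V + 2)
    (hq : ∀ i j, i ≤ j → j < 27 → g (t+i) - 1 ≤ g (t+j)) :
    ∃ d e, 1 ≤ d ∧ d ≤ 9 ∧ t ≤ e ∧ e + 3*d ≤ t + 27 ∧
      Zsum g e d = Zsum g (e+d) d ∧ Zsum g (e+d) d = Zsum g (e+2*d) d := by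
  by_contra hc
  push_neg at hc
  set u : ℕ → ℕ := fun i => (g (t+i) - (V-1)).toNat with hu
  have hval : ∀ i, i < 27 → g (t+i) = (V-1) + (u i : ℤ) := by
    intro i hi
    have := (hband i hi).1
    simp only [hu]
    omega
  refine FL u (fun i hi => ?_) (fun i j hij hj => ?_) (fun d e hd hde h1 h2 => ?_)
  · have h1 := (hband i hi).1
    have h2 := (hband i hi).2
    simp only [hu]
    omega
  · have h1 := (hband i (lt_of_le_of_lt hij hj)).1
    have h2 := (hband j hj).1
    have h3 := hq i j hij hj
    simp only [hu]
    omega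
  · have key : ∀ a, a + d ≤ 27 → Zsum g (t+a) d = d * (V-1) + (Ssum u a d : ℤ) := by
      intro a ha
      rw [← Zsum_shift g t a d]
      exact Zsum_eq_ofNat _ u (V-1) a d (fun i hi => hval (a+i) (by omega))
    have e1 : Zsum g (t+e) d = Zsum g (t+e+d) d := by
      rw [show t + e + d = t + (e + d) from by omega, key e (by omega),
        key (e+d) (by omega), h1]
    have e2 : Zsum g (t+e+d) d = Zsum g (t+e+2*d) d := by
      rw [show t + e + d = t + (e + d) from by omega,
        show t + e + 2*d = t + (e + 2*d) from by omega, key (e+d) (by omega),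
        key (e+2*d) (by omega)]
      congr 1
      exact_mod_cast h2
    exact hc d (t+e) hd (by omega) (by omega) (by omega) e1 e2

theorem growth (g : ℕ → ℤ) (hq0 : ∀ i j, i ≤ j → g i - 1 ≤ g j) (h0 : 2 ≤ g 0)
    (hnp : ∀ d e, 1 ≤ d → d ≤ 9 → 1 ≤ e → Zsum g e d = Zsum g (e+d) d →
      Zsum g (e+d) d ≠ Zsum g (e+2*d) d) :
    ∀ j : ℕ, ∃ m, m ≤ 27*j ∧ 2 + 3*(j:ℤ) ≤ g m := by
  intro j
  induction j with
  | zero => exact ⟨0, by omega, by simpa using h0⟩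
  | succ j ih =>
      obtain ⟨m, hm, hgm⟩ := ih
      by_cases hJ : ∃ i, i < 27 ∧ 2 + 3*((j:ℤ)+1) ≤ g (m+1+i)
      · obtain ⟨i, hi, hgi⟩ := hJ
        exact ⟨m+1+i, by omega, by push_cast; linarith⟩
      · push_neg at hJ
        obtain ⟨d, e, hd, hd9, hte, hde, h1, h2⟩ := WL g (m+1) (2+3*(j:ℤ))
          (fun i hi => ⟨by have := hq0 m (m+1+i) (by omega); linarith,
            by have := hJ i hi; linarith⟩)
          (fun i k hik hk => hq0 (m+1+i) (m+1+k) (by omega))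
        exact absurd h2 (hnp d e hd hd9 (by omega) h1)

theorem growth_bound (g : ℕ → ℤ) (hq0 : ∀ i j, i ≤ j → g i - 1 ≤ g j) (h0 : 2 ≤ g 0)
    (hnp : ∀ d e, 1 ≤ d → d ≤ 9 → 1 ≤ e → Zsum g e d = Zsum g (e+d) d →
      Zsum g (e+d) d ≠ Zsum g (e+2*d) d) :
    ∀ T : ℕ, (T:ℤ)*T - 35*T ≤ 18 * Zsum g 0 T := by
  have H9 : ∀ n : ℕ, (n:ℤ) - 17 ≤ 9 * g n := by
    intro n
    obtain ⟨m, hm, hgm⟩ := growth g hq0 h0 hnp (n / 27)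
    have h1 : g m - 1 ≤ g n := hq0 m n (by
      have := Nat.div_mul_le_self n 27
      omega)
    omega
  intro T
  induction T with
  | zero => simp [Zsum]
  | succ T ih =>
      have h9 := H9 T
      have hz : Zsum g 0 (T+1) = Zsum g 0 T + g T := by
        simp only [Zsum, Nat.zero_add]
      rw [hz]
      push_cast
      nlinarith [ih, h9]

section Outer

variable {f : ℕ → ℝ}

theorem slope_mono (hΔ2 : ∀ n, f (n + 1) - f n ≤ f (n + 2) - f (n + 1)) :
    ∀ m n, m ≤ n → f (m+1) - f m ≤ f (n+1) - f n := by
  intro m n h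
  induction n, h using Nat.le_induction with
  | base => exact le_refl _
  | succ n hmn ih => exact ih.trans (hΔ2 n)

theorem chunk_mono (hΔ2 : ∀ n, f (n + 1) - f n ≤ f (n + 2) - f (n + 1)) :
    ∀ a b t : ℕ, a ≤ b → f (a+t) - f a ≤ f (b+t) - f b := by
  intro a b t hab
  induction t with
  | zero => simp
  | succ t ih =>
      have h1 := slope_mono hΔ2 (a+t) (b+t) (by omega)
      have e1 : a + (t+1) = (a+t)+1 := by omega
      have e2 : b + (t+1) = (b+t)+1 := by omega
      rw [e1, e2]
      linarith

theorem chunk_lower (hΔ2 : ∀ n, f (n + 1) - f n ≤ f (n + 2) - f (n + 1)) :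
    ∀ a t : ℕ, f a + t * (f (a+1) - f a) ≤ f (a+t) := by
  intro a t
  induction t with
  | zero => simp
  | succ t ih =>
      have h1 := slope_mono hΔ2 a (a+t) (by omega)
      have e1 : a + (t+1) = (a+t)+1 := by omega
      rw [e1]
      push_cast
      nlinarith

theorem quad_growth (hΔ2 : ∀ n, f (n + 1) - f n ≤ f (n + 2) - f (n + 1))
    (s K : ℕ) (hs : 1 ≤ s) (hK : 1 ≤ K)
    (hg0 : 2 ≤ ⌊f (s + K)⌋ - ⌊f s⌋)
    (hnoAP : ∀ d e : ℕ, 0 < d → 0 < e → ∀ D : ℤ, 0 < D →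
      ⌊f (e+d)⌋ - ⌊f e⌋ = D → ⌊f (e+2*d)⌋ - ⌊f (e+d)⌋ = D →
      ⌊f (e+3*d)⌋ - ⌊f (e+2*d)⌋ = D → False) :
    ∀ T : ℕ, (T:ℤ)*T - 35*T ≤ 18 * (⌊f (s + K*T)⌋ - ⌊f s⌋) := by
  set g : ℕ → ℤ := fun n => ⌊f (s + K*(n+1))⌋ - ⌊f (s + K*n)⌋ with hg
  have htel : ∀ a d : ℕ, Zsum g a d = ⌊f (s + K*(a+d))⌋ - ⌊f (s + K*a)⌋ := by
    intro a d
    induction d with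
    | zero => simp [Zsum]
    | succ d ih =>
        rw [Zsum, ih, hg]; beta_reduce
        have e1 : a + (d+1) = (a+d)+1 := by omega
        rw [e1]
        ring
  have hquasi : ∀ i j, i ≤ j → g i - 1 ≤ g j := by
    intro i j hij
    have hreal : f (s + K*i + K) - f (s + K*i) ≤ f (s + K*j + K) - f (s + K*j) :=
      chunk_mono hΔ2 (s + K*i) (s + K*j) K (by
        have : K*i ≤ K*j := Nat.mul_le_mul_left K hij
        omega)
    have e1 : s + K*i + K = s + K*(i+1) := by ring
    have e2 : s + K*j + K = s + K*(j+1) := by ring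
    rw [e1, e2] at hreal
    have f1 : (⌊f (s + K*(i+1))⌋ : ℝ) ≤ f (s + K*(i+1)) := Int.floor_le _
    have f2 : f (s + K*i) < ⌊f (s + K*i)⌋ + 1 := Int.lt_floor_add_one _
    have f3 : (⌊f (s + K*(j+1))⌋ : ℝ) + 1 > f (s + K*(j+1)) := Int.lt_floor_add_one _
    have f4 : (⌊f (s + K*j)⌋ : ℝ) ≤ f (s + K*j) := Int.floor_le _
    have : ((g i : ℤ) : ℝ) < ((g j : ℤ) : ℝ) + 2 := by
      simp only [hg]
      push_cast
      linarith
    have h2 : (g i : ℤ) < g j + 2 := by exact_mod_cast this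
    omega
  have hg0' : 2 ≤ g 0 := by
    simp only [hg]
    have e1 : s + K*(0+1) = s + K := by ring
    have e2 : s + K*0 = s := by ring
    rw [e1, e2]
    exact hg0
  have hpos : ∀ i, 1 ≤ g i := fun i => by have := hquasi 0 i (Nat.zero_le i); omega
  have hblock : ∀ e d : ℕ, (d:ℤ) ≤ Zsum g e d := by
    intro e d
    induction d with
    | zero => simp [Zsum]
    | succ d ih =>
        simp only [Zsum]
        have := hpos (e+d)
        push_cast
        omega
  have hnp : ∀ d e, 1 ≤ d → d ≤ 9 → 1 ≤ e → Zsum g e d = Zsum g (e+d) d →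
      Zsum g (e+d) d ≠ Zsum g (e+2*d) d := by
    intro d e hd _ he h1 h2
    set D : ℤ := Zsum g e d with hD
    have hDpos : 0 < D := lt_of_lt_of_le (by exact_mod_cast hd) (hblock e d)
    refine hnoAP (K*d) (s + K*e) (by positivity) (by positivity) D hDpos ?_ ?_ ?_
    · have e1 : s + K*e + K*d = s + K*(e+d) := by ring
      rw [e1, ← htel e d]
    · have e1 : s + K*e + 2*(K*d) = s + K*(e+d+d) := by ring
      have e2 : s + K*e + K*d = s + K*(e+d) := by ring
      rw [e1, e2, ← htel (e+d) d]
      exact h1.symm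
    · have e1 : s + K*e + 3*(K*d) = s + K*(e+2*d+d) := by ring
      have e2 : s + K*e + 2*(K*d) = s + K*(e+2*d) := by ring
      rw [e1, e2, ← htel (e+2*d) d]
      rw [← h2]
      exact h1.symm
  intro T
  have := growth_bound g hquasi hg0' hnp T
  rw [htel 0 T] at this
  have e1 : s + K*(0+T) = s + K*T := by ring
  have e2 : s + K*0 = s := by ring
  rw [e1, e2] at this
  exact this

end Outer

set_option maxHeartbeats 2000000 in
theorem stmt_12 (f : ℕ → ℝ) (hfpos : ∀ n, 0 < f n)
    (hΔ : ∀ n, f n < f (n + 1))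
    (hΔ2 : ∀ n, f (n + 1) - f n ≤ f (n + 2) - f (n + 1))
    (h18 : (18 : ENNReal) < Filter.limsup (fun x : ℝ =>
      ENNReal.ofReal ((Set.ncard {n : ℕ | f n ≤ x} : ℝ) ^ 2 / x)) Filter.atTop) :
    ∃ d e : ℕ, 0 < d ∧ 0 < e ∧ ∃ D : ℤ, 0 < D ∧
      ⌊f (e + d)⌋ - ⌊f e⌋ = D ∧ ⌊f (e + 2 * d)⌋ - ⌊f (e + d)⌋ = D ∧
      ⌊f (e + 3 * d)⌋ - ⌊f (e + 2 * d)⌋ = D := by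
  by_contra hcon
  have hnoAP : ∀ d e : ℕ, 0 < d → 0 < e → ∀ D : ℤ, 0 < D →
      ⌊f (e+d)⌋ - ⌊f e⌋ = D → ⌊f (e+2*d)⌋ - ⌊f (e+d)⌋ = D →
      ⌊f (e+3*d)⌋ - ⌊f (e+2*d)⌋ = D → False := by
    intro d e hd he D hD h1 h2 h3
    exact hcon ⟨d, e, hd, he, D, hD, h1, h2, h3⟩
  have hmono : StrictMono f := strictMono_nat_of_lt_succ hΔ
  by_cases hC : ∃ n, 1 ≤ n ∧ 2 ≤ ⌊f (n+1)⌋ - ⌊f n⌋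
  -- Case 1 : some letter is at least 2; quadratic growth contradicts limsup > 18
  · obtain ⟨n₀, hn₀, hg0⟩ := hC
    have hQ : ∀ T : ℕ, (T:ℤ)*T - 35*T ≤ 18 * (⌊f (n₀ + T)⌋ - ⌊f n₀⌋) := by
      intro T
      have := quad_growth hΔ2 n₀ 1 hn₀ (le_refl 1) (by simpa using hg0) hnoAP T
      simpa using this
    have hQR : ∀ T : ℕ, (T:ℝ)*T - 35*T ≤ 18 * f (n₀ + T) := by
      intro T
      have h1 := hQ T
      have h2 : (0:ℤ) ≤ ⌊f n₀⌋ := Int.floor_nonneg.2 (le_of_lt (hfpos n₀))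
      have h3 : (⌊f (n₀ + T)⌋ : ℝ) ≤ f (n₀ + T) := Int.floor_le _
      have h4 : ((T:ℤ)*T - 35*T : ℤ) ≤ 18 * ⌊f (n₀ + T)⌋ := by omega
      have h5 : (((T:ℤ)*T - 35*T : ℤ) : ℝ) ≤ ((18 * ⌊f (n₀ + T)⌋ : ℤ) : ℝ) :=
        Int.cast_le.2 h4
      push_cast at h5
      linarith
    -- extract a margin ρ > 18 from the limsup
    obtain ⟨a, h18a, halim⟩ := exists_between h18
    have hane : a ≠ ⊤ := ne_top_of_lt halim
    set ρ := a.toReal with hρdef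
    have hρ : 18 < ρ := by
      have := (ENNReal.toReal_lt_toReal (by norm_num) hane).2 h18a
      simpa using this
    have hfreq : ∀ x₀ : ℝ, ∃ x, x₀ ≤ x ∧
        a < ENNReal.ofReal ((Set.ncard {n : ℕ | f n ≤ x} : ℝ) ^ 2 / x) := by
      intro x₀
      by_contra hcon2
      push_neg at hcon2
      have hev : ∀ᶠ x in Filter.atTop,
          ENNReal.ofReal ((Set.ncard {n : ℕ | f n ≤ x} : ℝ) ^ 2 / x) ≤ a :=
        Filter.eventually_atTop.2 ⟨x₀, hcon2⟩
      exact absurd (Filter.limsup_le_of_le (by isBoundedDefault) hev) (not_le.2 halim)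
    -- choose a large threshold
    set C₁ : ℕ := ⌈ρ * (2*(n₀:ℝ)+37)/(ρ-18)⌉₊ with hC₁
    set Ns : ℕ := n₀ + 37 + C₁ with hNs
    obtain ⟨x, hxx₀, hx⟩ := hfreq (((Ns:ℝ)+1)^2)
    set S : Set ℕ := {n : ℕ | f n ≤ x} with hS
    set N : ℕ := S.ncard with hN
    have hρx : ρ < (N:ℝ)^2 / x := by
      have := (ENNReal.lt_ofReal_iff_toReal_lt hane).1 hx
      exact this
    have hxpos : 0 < x := by
      rcases le_or_gt x 0 with h | h
      · exfalso
        have : ((N:ℝ)^2) / x ≤ 0 := div_nonpos_of_nonneg_of_nonpos (by positivity) h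
        linarith
      · exact h
    have hNx : ρ * x < (N:ℝ)^2 := (lt_div_iff₀ hxpos).1 hρx
    -- S is finite and an initial segment
    have hlow : ∀ n : ℕ, f 0 + n * (f 1 - f 0) ≤ f n := by
      intro n
      have := chunk_lower hΔ2 0 n
      simpa using this
    have hδ0 : 0 < f 1 - f 0 := by have := hΔ 0; linarith
    have hSfin : S.Finite := by
      apply Set.Finite.subset (Set.finite_Iio (⌈(x - f 0)/(f 1 - f 0)⌉₊ + 1))
      intro n hn
      simp only [hS, Set.mem_setOf_eq] at hn
      have h1 := hlow n
      have h2 : (n:ℝ) * (f 1 - f 0) ≤ x - f 0 := by linarith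
      have h3 : (n:ℝ) ≤ (x - f 0)/(f 1 - f 0) := (le_div_iff₀ hδ0).2 h2
      have h4 : (n:ℝ) ≤ ⌈(x - f 0)/(f 1 - f 0)⌉₊ := h3.trans (Nat.le_ceil _)
      have h5 : n ≤ ⌈(x - f 0)/(f 1 - f 0)⌉₊ := by exact_mod_cast h4
      simp only [Set.mem_Iio]
      omega
    have hNlarge : Ns < N := by
      by_contra hcon3
      push_neg at hcon3
      have h1 : (N:ℝ) ≤ Ns := by exact_mod_cast hcon3
      have h2 : (N:ℝ)^2 ≤ ((Ns:ℝ)+1)^2 := by nlinarith [Nat.cast_nonneg (α := ℝ) N]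
      have h3 : ρ * x ≥ 18 * (((Ns:ℝ)+1)^2) := by nlinarith
      have h4 : (0:ℝ) < ((Ns:ℝ)+1)^2 := by positivity
      linarith
    have hfN : f (N - 1) ≤ x := by
      by_contra hcon4
      push_neg at hcon4
      have hsub : S ⊆ Set.Iio (N - 1) := by
        intro n hn
        simp only [hS, Set.mem_setOf_eq] at hn
        simp only [Set.mem_Iio]
        by_contra hge
        push_neg at hge
        have : f (N - 1) ≤ f n := hmono.monotone hge
        linarith
      have h1 : N ≤ (Set.Iio (N - 1)).ncard :=
        hN ▸ Set.ncard_le_ncard hsub (Set.finite_Iio _)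
      have h2 : (Set.Iio (N - 1)).ncard = N - 1 := by
        rw [← Finset.coe_range, Set.ncard_coe_finset, Finset.card_range]
      omega
    -- assemble the contradiction
    set T : ℕ := N - 1 - n₀ with hT
    have hTval : (T:ℝ) = (N:ℝ) - 1 - n₀ := by
      rw [hT, Nat.cast_sub (show n₀ ≤ N - 1 by omega), Nat.cast_sub (show 1 ≤ N by omega)]
      push_cast
      ring
    have hQT : (T:ℝ)*T - 35*T ≤ 18 * x := by
      have h1 := hQR T
      have h2 : n₀ + T = N - 1 := by omega
      rw [h2] at h1
      linarith
    have hC₁' : ρ * (2*(n₀:ℝ)+37) ≤ (ρ - 18) * N := by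
      have h1 : ρ * (2*(n₀:ℝ)+37)/(ρ-18) ≤ C₁ := Nat.le_ceil _
      have h2 : (C₁:ℝ) ≤ N := by
        have : C₁ ≤ N := by omega
        exact_mod_cast this
      have h3 : ρ * (2*(n₀:ℝ)+37)/(ρ-18) ≤ N := h1.trans h2
      have h4 : 0 < ρ - 18 := by linarith
      calc ρ * (2*(n₀:ℝ)+37) = ρ * (2*(n₀:ℝ)+37)/(ρ-18) * (ρ-18) := by
            field_simp
        _ ≤ (N:ℝ) * (ρ-18) := by
            apply mul_le_mul_of_nonneg_right h3 (le_of_lt h4)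
        _ = (ρ - 18) * N := by ring
    have hTbig : (T:ℝ)*T - 35*T ≥ (N:ℝ)^2 - (2*(n₀:ℝ)+37)*N := by
      rw [hTval]
      have hNn : (N:ℝ) ≥ n₀ + 38 := by
        have : n₀ + 38 ≤ N := by omega
        exact_mod_cast this
      nlinarith
    have hfinal : ρ * ((T:ℝ)*T - 35*T) ≥ 18 * (N:ℝ)^2 := by
      have hNpos : (0:ℝ) < N := by
        have : 0 < N := by omega
        exact_mod_cast this
      have h1 : ρ * ((T:ℝ)*T - 35*T) ≥ ρ * ((N:ℝ)^2 - (2*(n₀:ℝ)+37)*N) :=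
        mul_le_mul_of_nonneg_left hTbig (by linarith)
      have h2 : (ρ - 18) * (N:ℝ)^2 ≥ ρ * (2*(n₀:ℝ)+37) * N := by
        have := mul_le_mul_of_nonneg_right hC₁' (le_of_lt hNpos)
        nlinarith
      nlinarith
    have : ρ * ((T:ℝ)*T - 35*T) ≤ ρ * (18 * x) :=
      mul_le_mul_of_nonneg_left hQT (by linarith)
    nlinarith
  -- Case 2 : all letters ≤ 1; bounded slopes, subsample to force quadratic growth
  · push_neg at hC
    have hCle : ∀ n, 1 ≤ n → ⌊f (n+1)⌋ - ⌊f n⌋ ≤ 1 := by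
      intro n hn
      have := hC n hn
      omega
    have hslope : ∀ n, 1 ≤ n → f (n+1) < f n + 2 := by
      intro n hn
      have h1 : f (n+1) < ⌊f (n+1)⌋ + 1 := Int.lt_floor_add_one _
      have h2 : (⌊f (n+1)⌋ : ℝ) ≤ ⌊f n⌋ + 1 := by
        have := hCle n hn
        have : ((⌊f (n+1)⌋ : ℤ) : ℝ) ≤ ((⌊f n⌋ + 1 : ℤ) : ℝ) := Int.cast_le.2 (by omega)
        push_cast at this
        linarith
      have h3 : (⌊f n⌋ : ℝ) ≤ f n := Int.floor_le _
      linarith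
    have hlin : ∀ j : ℕ, f (1 + j) ≤ f 1 + 2*j := by
      intro j
      induction j with
      | zero => simp
      | succ j ih =>
          have h1 := hslope (1+j) (by omega)
          have e1 : 1 + (j+1) = (1+j)+1 := by omega
          rw [e1]
          push_cast
          linarith
    have hδ1 : 0 < f 2 - f 1 := by have := hΔ 1; norm_num at this ⊢; linarith
    obtain ⟨K, hK1, hK3⟩ : ∃ K : ℕ, 1 ≤ K ∧ 3 ≤ (K:ℝ) * (f 2 - f 1) := by
      refine ⟨max 1 ⌈(3:ℝ)/(f 2 - f 1)⌉₊, le_max_left _ _, ?_⟩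
      have h1 : (3:ℝ)/(f 2 - f 1) ≤ ⌈(3:ℝ)/(f 2 - f 1)⌉₊ := Nat.le_ceil _
      have h2 : ((⌈(3:ℝ)/(f 2 - f 1)⌉₊ : ℕ) : ℝ) ≤ ((max 1 ⌈(3:ℝ)/(f 2 - f 1)⌉₊ : ℕ) : ℝ) := by
        exact_mod_cast le_max_right 1 ⌈(3:ℝ)/(f 2 - f 1)⌉₊
      have h3 : (3:ℝ)/(f 2 - f 1) ≤ ((max 1 ⌈(3:ℝ)/(f 2 - f 1)⌉₊ : ℕ) : ℝ) := h1.trans h2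
      calc (3:ℝ) = (3:ℝ)/(f 2 - f 1) * (f 2 - f 1) := by field_simp
        _ ≤ _ := mul_le_mul_of_nonneg_right h3 (le_of_lt hδ1)
    have hg0 : 2 ≤ ⌊f (1 + K)⌋ - ⌊f 1⌋ := by
      have h1 : f 1 + K * (f 2 - f 1) ≤ f (1 + K) := by
        have h0 := chunk_lower hΔ2 1 K
        have e : (1:ℕ)+1 = 2 := rfl
        rw [e] at h0
        exact h0
      have h2 : f 1 + 3 ≤ f (1 + K) := by linarith
      have h3 : f (1+K) < ⌊f (1+K)⌋ + 1 := Int.lt_floor_add_one _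
      have h4 : (⌊f 1⌋ : ℝ) ≤ f 1 := Int.floor_le _
      have h5 : ((⌊f 1⌋ : ℤ) : ℝ) + 2 < ((⌊f (1+K)⌋ : ℤ) : ℝ) := by linarith
      have h6 : (⌊f 1⌋ : ℤ) + 2 < ⌊f (1+K)⌋ := by exact_mod_cast h5
      omega
    have hQ := quad_growth hΔ2 1 K (le_refl 1) hK1 hg0 hnoAP
    have h1 := hQ (36*K + 54)
    have h2 : (⌊f (1 + K*(36*K+54))⌋ : ℝ) ≤ f (1 + K*(36*K+54)) := Int.floor_le _
    have h3 : f 1 - 1 < (⌊f 1⌋ : ℝ) := by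
      have := Int.lt_floor_add_one (f 1); linarith
    have h4 := hlin (K*(36*K+54))
    have h5 : ((36*K+54 : ℕ):ℝ)*((36*K+54 : ℕ):ℝ) - 35*((36*K+54 : ℕ):ℝ) ≤
        18 * ((⌊f (1 + K*(36*K+54))⌋ : ℝ) - (⌊f 1⌋ : ℝ)) := by exact_mod_cast h1
    have hKR : (1:ℝ) ≤ K := by exact_mod_cast hK1
    push_cast at h4 h5
    nlinarith [h2, h3, h4, h5, hKR]
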